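/- Let p, r ≥ 1 and q ≥ 0 be integers, and define f(x) = −ln(1 − I_{x^r}(q+1, p)). Then, as x → 0 from the right, f(x) = C(p+q, q+1)·x^{r(q+1)} + O(x^{r(q+1)+1}); that is, the function x ↦ f(x) − C(p+q, q+1)·x^{r(q+1)} is O(x^{r(q+1)+1}) as x → 0⁺, where C(p+q, q+1) denotes the binomial coefficient. -/

import Mathlib

/-- The regularized incomplete Beta function `I_x(a, b)` for positive integer
parameters `a, b`. -/
noncomputable def regIncBeta (a b : ℕ) (x : ℝ) : ℝ :=
  (∫ t in (0:ℝ)..1, t ^ (a - 1) * (1 - t) ^ (b - 1))⁻¹ *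
    ∫ t in (0:ℝ)..x, t ^ (a - 1) * (1 - t) ^ (b - 1)


open intervalIntegral in
lemma betaJ_cont (a b : ℕ) : Continuous (fun t : ℝ => t^a*(1-t)^b) := by fun_prop

lemma betaJ_rec (a b : ℕ) :
    (a+1 : ℝ) * ∫ t in (0:ℝ)..1, t^a*(1-t)^(b+1) =
    (b+1 : ℝ) * ∫ t in (0:ℝ)..1, t^(a+1)*(1-t)^b := by
  have hd : ∀ t : ℝ, HasDerivAt (fun t : ℝ => t^(a+1)*(1-t)^(b+1))
      ((a+1:ℝ)*(t^a*(1-t)^(b+1)) - (b+1:ℝ)*(t^(a+1)*(1-t)^b)) t := by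
    intro t
    have h1 : HasDerivAt (fun t:ℝ => t^(a+1)) (((a:ℝ)+1)*t^a) t := by
      simpa using hasDerivAt_pow (a+1) t
    have h2 : HasDerivAt (fun t:ℝ => (1-t)^(b+1)) (-(((b:ℝ)+1)*(1-t)^b)) t := by
      have h0 : HasDerivAt (fun t:ℝ => (1:ℝ)-t) (-1) t := by
        simpa using (hasDerivAt_id t).const_sub (1:ℝ)
      have := (hasDerivAt_pow (b+1) ((1:ℝ)-t)).comp t h0
      refine this.congr_deriv ?_
      push_cast; ring
    have := h1.mul h2
    refine this.congr_deriv ?_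
    push_cast; ring
  have key : ∫ t in (0:ℝ)..1,
      (((a:ℝ)+1)*(t^a*(1-t)^(b+1)) - ((b:ℝ)+1)*(t^(a+1)*(1-t)^b)) = 0 := by
    rw [intervalIntegral.integral_eq_sub_of_hasDerivAt (fun t _ => hd t)]
    · simp
    · apply Continuous.intervalIntegrable
      exact (continuous_const.mul (betaJ_cont a (b+1))).sub
        (continuous_const.mul (betaJ_cont (a+1) b))
  rw [intervalIntegral.integral_sub, intervalIntegral.integral_const_mul,
    intervalIntegral.integral_const_mul] at key
  · linarith
  · exact (continuous_const.mul (betaJ_cont a (b+1))).intervalIntegrable _ _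
  · exact (continuous_const.mul (betaJ_cont (a+1) b)).intervalIntegrable _ _

lemma betaJ (a b : ℕ) : ∫ t in (0:ℝ)..1, t^a*(1-t)^b =
    (a.factorial * b.factorial : ℝ)/((a+b+1).factorial) := by
  induction b generalizing a with
  | zero =>
    simp only [pow_zero, mul_one, integral_pow, Nat.factorial_succ, add_zero]
    have : (a.factorial : ℝ) ≠ 0 := by positivity
    push_cast
    rw [one_pow, zero_pow (by omega)]
    field_simp
    simp
  | succ b ih =>
    have h := betaJ_rec a b
    rw [ih (a+1)] at h
    have h1 : ((a:ℝ)+1) ≠ 0 := by positivity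
    have h2 : ((a+1+b+1).factorial : ℝ) ≠ 0 := by positivity
    have e1 : a + (b+1) + 1 = a + 1 + b + 1 := by omega
    rw [e1]
    rw [Nat.factorial_succ b]
    rw [Nat.factorial_succ a] at h
    rw [eq_div_iff h2]
    rw [mul_div_assoc', eq_div_iff h2] at h
    push_cast at h ⊢
    apply mul_left_cancel₀ h1
    nlinarith [h]

lemma G_nonneg (a b : ℕ) {y : ℝ} (h0 : 0 ≤ y) (h1 : y ≤ 1) :
    0 ≤ ∫ t in (0:ℝ)..y, t^a*(1-t)^b := by
  apply intervalIntegral.integral_nonneg h0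
  intro t ht
  exact mul_nonneg (pow_nonneg ht.1 _) (pow_nonneg (by linarith [ht.2]) _)

lemma G_le (a b : ℕ) {y : ℝ} (h0 : 0 ≤ y) (h1 : y ≤ 1) :
    ∫ t in (0:ℝ)..y, t^a*(1-t)^b ≤ y^(a+1) := by
  have hb : ∀ t ∈ Set.uIoc (0:ℝ) y, ‖t^a*(1-t)^b‖ ≤ y^a := by
    intro t ht
    rw [Set.uIoc_of_le h0] at ht
    rw [Real.norm_eq_abs, abs_mul, abs_pow, abs_pow]
    obtain ⟨ht0', hty'⟩ := ht
    have h1t : |1 - t| ≤ 1 := by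
      rw [abs_le]; constructor <;> linarith
    calc |t|^a * |1-t|^b ≤ y^a * 1 := by
          apply mul_le_mul
          · exact pow_le_pow_left₀ (abs_nonneg _) (by rw [abs_of_pos ht0']; exact hty') a
          · exact pow_le_one₀ (abs_nonneg _) h1t
          · positivity
          · positivity
      _ = y^a := mul_one _
  have := intervalIntegral.norm_integral_le_of_norm_le_const hb
  rw [Real.norm_eq_abs] at this
  calc (∫ t in (0:ℝ)..y, t^a*(1-t)^b) ≤ |∫ t in (0:ℝ)..y, t^a*(1-t)^b| := le_abs_self _
    _ ≤ y^a * |y - 0| := this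
    _ = y^(a+1) := by rw [sub_zero, abs_of_nonneg h0, pow_succ]

lemma G_approx (a b : ℕ) {y : ℝ} (h0 : 0 ≤ y) (h1 : y ≤ 1) :
    |(∫ t in (0:ℝ)..y, t^a*(1-t)^b) - y^(a+1)/((a:ℝ)+1)| ≤ b * y^(a+2) := by
  have int1 : IntervalIntegrable (fun t : ℝ => t^a*(1-t)^b) MeasureTheory.volume 0 y :=
    (by fun_prop : Continuous (fun t : ℝ => t^a*(1-t)^b)).intervalIntegrable _ _
  have int2 : IntervalIntegrable (fun t : ℝ => t^a) MeasureTheory.volume 0 y :=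
    (continuous_pow a).intervalIntegrable _ _
  have hsub : (∫ t in (0:ℝ)..y, t^a*(1-t)^b) - y^(a+1)/((a:ℝ)+1)
      = ∫ t in (0:ℝ)..y, (t^a*(1-t)^b - t^a) := by
    rw [intervalIntegral.integral_sub int1 int2, integral_pow, zero_pow (by omega), sub_zero]
  rw [hsub]
  have hb : ∀ t ∈ Set.uIoc (0:ℝ) y, ‖t^a*(1-t)^b - t^a‖ ≤ b * y^(a+1) := by
    intro t ht
    rw [Set.uIoc_of_le h0] at ht
    have ht0 : 0 < t := ht.1
    have hty : t ≤ y := ht.2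
    have ht1 : t ≤ 1 := le_trans hty h1
    have hber : 1 - (b:ℝ)*t ≤ (1-t)^b := by
      have h := one_add_mul_le_pow (a := -t) (by linarith : (-2:ℝ) ≤ -t) b
      simpa [mul_neg, sub_eq_add_neg] using h
    have hle1 : (1-t)^b ≤ 1 := pow_le_one₀ (by linarith) (by linarith)
    have hbt : 0 ≤ (b:ℝ)*t := by positivity
    have key : |(1-t)^b - 1| ≤ (b:ℝ)*t := by
      rw [abs_le]
      constructor <;> linarith
    have e : t^a*(1-t)^b - t^a = t^a * ((1-t)^b - 1) := by ring
    rw [e, Real.norm_eq_abs, abs_mul, abs_pow, abs_of_pos ht0]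
    calc t^a * |(1-t)^b - 1| ≤ y^a * ((b:ℝ)*y) := by
          apply mul_le_mul (pow_le_pow_left₀ ht0.le hty a)
            (le_trans key (by nlinarith)) (abs_nonneg _) (by positivity)
      _ = b * y^(a+1) := by rw [pow_succ]; ring
  have := intervalIntegral.norm_integral_le_of_norm_le_const hb
  rw [Real.norm_eq_abs, sub_zero, abs_of_nonneg h0] at this
  calc |∫ t in (0:ℝ)..y, (t^a*(1-t)^b - t^a)| ≤ (b:ℝ) * y^(a+1) * y := this
    _ = b * y^(a+2) := by rw [pow_succ]; ring

lemma neg_log_bound {u : ℝ} (h0 : 0 ≤ u) (h2 : u ≤ 1/2) :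
    |(-Real.log (1-u)) - u| ≤ 2*u^2 := by
  have hpos : 0 < 1 - u := by linarith
  have hl : Real.log (1-u) ≤ -u := by
    have := Real.log_le_sub_one_of_pos hpos; linarith
  have h4 := Real.log_le_sub_one_of_pos (inv_pos.2 hpos)
  rw [Real.log_inv] at h4
  have h5 : (1-u)⁻¹ - 1 ≤ u + 2*u^2 := by
    have : (1-u)⁻¹ ≤ 1 + u + 2*u^2 := by
      rw [inv_eq_one_div, div_le_iff₀ hpos]; nlinarith
    linarith
  rw [abs_le]
  constructor <;> nlinarith [sq_nonneg u]

open Asymptotics Filter in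
theorem stmt1 (p q r : ℕ) (hp : 1 ≤ p) (hr : 1 ≤ r) :
    (fun x : ℝ =>
        -Real.log (1 - regIncBeta (q + 1) p (x ^ r)) -
          (Nat.choose (p + q) (q + 1) : ℝ) * x ^ (r * (q + 1)))
      =O[nhdsWithin (0 : ℝ) (Set.Ioi 0)]
        fun x : ℝ => x ^ (r * (q + 1) + 1) := by
  obtain ⟨b, rfl⟩ : ∃ b, p = b + 1 := ⟨p - 1, by omega⟩
  set C : ℝ := (Nat.choose (b + 1 + q) (q + 1) : ℝ) with hCdef
  set B : ℝ := ∫ t in (0:ℝ)..1, t^q*(1-t)^b with hBdef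
  have hBval : B = (q.factorial * b.factorial : ℝ)/((q+b+1).factorial) := betaJ q b
  have hBpos : 0 < B := by rw [hBval]; positivity
  have hBinv : B⁻¹ = ((q:ℝ)+1) * C := by
    have key := Nat.choose_mul_factorial_mul_factorial
      (show q + 1 ≤ b + 1 + q by omega)
    rw [show b + 1 + q - (q+1) = b from by omega] at key
    have key' : C * (((q:ℝ)+1) * q.factorial) * b.factorial = ((q+b+1).factorial : ℝ) := by
      have := congrArg (Nat.cast : ℕ → ℝ) key
      rw [show b + 1 + q = q + b + 1 from by omega, Nat.factorial_succ (q)] at this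
      push_cast at this
      rw [hCdef, show b + 1 + q = q + b + 1 from by omega]
      exact this
    rw [hBval]
    have h1 : (q.factorial : ℝ) ≠ 0 := by positivity
    have h2 : (b.factorial : ℝ) ≠ 0 := by positivity
    have h3 : ((q+b+1).factorial : ℝ) ≠ 0 := by positivity
    field_simp
    linear_combination key'.symm
  set K : ℝ := 2*B⁻¹^2 + B⁻¹*b with hKdef
  have hK0 : 0 ≤ K := by positivity
  set δ : ℝ := min 1 (B/2) with hδdef
  have hδpos : 0 < δ := lt_min one_pos (by linarith)
  rw [Asymptotics.isBigO_iff]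
  refine ⟨K, ?_⟩
  filter_upwards [Ioo_mem_nhdsGT_of_mem (Set.mem_Ico.2 ⟨le_refl (0:ℝ), hδpos⟩)]
  intro x hx
  obtain ⟨hx0, hxδ⟩ := hx
  have hx1 : x ≤ 1 := le_trans hxδ.le (min_le_left _ _)
  have hxB : x ≤ B/2 := le_trans hxδ.le (min_le_right _ _)
  set y : ℝ := x^r with hy
  have hy0 : 0 < y := pow_pos hx0 r
  have hyx : y ≤ x := by
    have := pow_le_pow_of_le_one hx0.le hx1 hr
    simpa using this
  have hy1 : y ≤ 1 := le_trans hyx hx1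
  set G : ℝ := ∫ t in (0:ℝ)..y, t^q*(1-t)^b with hGdef
  have hGa : |G - y^(q+1)/((q:ℝ)+1)| ≤ b * y^(q+2) := G_approx q b hy0.le hy1
  have hGn : 0 ≤ G := G_nonneg q b hy0.le hy1
  have hGle : G ≤ y^(q+1) := G_le q b hy0.le hy1
  have hI : regIncBeta (q+1) (b+1) y = B⁻¹ * G := by
    simp [regIncBeta, hBdef, hGdef]
  set u : ℝ := B⁻¹ * G with hu
  have hu0 : 0 ≤ u := mul_nonneg (inv_nonneg.2 hBpos.le) hGn
  have huB : u ≤ B⁻¹ * y^(q+1) :=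
    mul_le_mul_of_nonneg_left hGle (inv_nonneg.2 hBpos.le)
  have hu2 : u ≤ 1/2 := by
    have h1 : y^(q+1) ≤ y := by
      have := pow_le_pow_of_le_one hy0.le hy1 (show 1 ≤ q+1 by omega)
      simpa using this
    have h2 : B⁻¹ * y^(q+1) ≤ B⁻¹ * (B/2) :=
      mul_le_mul_of_nonneg_left (by linarith) (inv_nonneg.2 hBpos.le)
    have h3 : B⁻¹ * (B/2) = 1/2 := by field_simp
    linarith
  have hlog : |(-Real.log (1-u)) - u| ≤ 2*u^2 := neg_log_bound hu0 hu2
  have hxpow : x^(r*(q+1)) = y^(q+1) := by rw [hy, ← pow_mul]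
  have hCy : C * y^(q+1) = B⁻¹ * (y^(q+1)/((q:ℝ)+1)) := by
    rw [hBinv]
    have : ((q:ℝ)+1) ≠ 0 := by positivity
    field_simp
  have key : |(-Real.log (1-u)) - C*y^(q+1)| ≤ K * y^(q+2) := by
    have e1 : (-Real.log (1-u)) - C*y^(q+1)
        = ((-Real.log (1-u)) - u) + B⁻¹*(G - y^(q+1)/((q:ℝ)+1)) := by
      rw [hCy, hu]; ring
    rw [e1]
    have t2 : |B⁻¹*(G - y^(q+1)/((q:ℝ)+1))| ≤ B⁻¹*((b:ℝ)*y^(q+2)) := by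
      rw [abs_mul, abs_of_nonneg (inv_nonneg.2 hBpos.le)]
      exact mul_le_mul_of_nonneg_left hGa (inv_nonneg.2 hBpos.le)
    have t3 : u^2 ≤ B⁻¹^2 * y^(q+2) := by
      have s1 : u^2 ≤ (B⁻¹ * y^(q+1))^2 := pow_le_pow_left₀ hu0 huB 2
      have s2 : (B⁻¹ * y^(q+1))^2 = B⁻¹^2 * y^((q+1)*2) := by
        rw [mul_pow, pow_mul]
      have s3 : y^((q+1)*2) ≤ y^(q+2) :=
        pow_le_pow_of_le_one hy0.le hy1 (by omega)
      calc u^2 ≤ B⁻¹^2 * y^((q+1)*2) := by rw [← s2]; exact s1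
        _ ≤ B⁻¹^2 * y^(q+2) := mul_le_mul_of_nonneg_left s3 (by positivity)
    calc |((-Real.log (1-u)) - u) + B⁻¹*(G - y^(q+1)/((q:ℝ)+1))|
        ≤ |(-Real.log (1-u)) - u| + |B⁻¹*(G - y^(q+1)/((q:ℝ)+1))| := abs_add_le _ _
      _ ≤ 2*(B⁻¹^2 * y^(q+2)) + B⁻¹*((b:ℝ)*y^(q+2)) := by
          have := hlog; nlinarith [t3]
      _ = K * y^(q+2) := by rw [hKdef]; ring
  have hy2 : y^(q+2) ≤ x^(r*(q+1)+1) := by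
    rw [hy, ← pow_mul]
    have hle : r*(q+1)+1 ≤ r*(q+2) := by
      have : r*(q+2) = r*(q+1) + r := by ring
      omega
    exact pow_le_pow_of_le_one hx0.le hx1 hle
  rw [Real.norm_eq_abs, Real.norm_eq_abs, hI, hxpow,
    abs_of_nonneg (pow_nonneg hx0.le _)]
  calc |(-Real.log (1-u)) - C*y^(q+1)| ≤ K * y^(q+2) := key
    _ ≤ K * x^(r*(q+1)+1) := mul_le_mul_of_nonneg_left hy2 hK0
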